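/- arXiv:2202.11199 — 2 statements merged into one kernel-verified Lean document; each statement's English description precedes it below -/
import Mathlib

section
/- Let Σ' = [[Σ, Σβ], [βᵀΣ, σ_ε² + βᵀΣβ]] be the (d+1)×(d+1) block covariance matrix of the linear regression model, with Σ symmetric positive definite. Then the smallest eigenvalue of Σ' satisfies λ_min(Σ') ≥ σ_ε² λ_min(Σ) / (σ_ε² + βᵀΣβ + λ_min(Σ)). -/
open Matrix

/-- The smallest eigenvalue of a symmetric matrix, as the infimum of the Rayleigh
quotient over the unit sphere. -/
noncomputable def lmin {n : Type*} [Fintype n] (M : Matrix n n ℝ) : ℝ :=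
  ⨅ x : {x : n → ℝ // ∑ i, x i ^ 2 = 1}, (x : n → ℝ) ⬝ᵥ M.mulVec x

/-- The largest eigenvalue of a symmetric matrix, as the supremum of the Rayleigh
quotient over the unit sphere. -/
noncomputable def lmax {n : Type*} [Fintype n] (M : Matrix n n ℝ) : ℝ :=
  ⨆ x : {x : n → ℝ // ∑ i, x i ^ 2 = 1}, (x : n → ℝ) ⬝ᵥ M.mulVec x

lemma dot_symm {n : Type*} [Fintype n] {S : Matrix n n ℝ} (hS : S.IsHermitian)
    (u v : n → ℝ) : u ⬝ᵥ S *ᵥ v = v ⬝ᵥ S *ᵥ u := by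
  have hT : Sᵀ = S := by
    rw [← conjTranspose_eq_transpose_of_trivial]; exact hS
  rw [dotProduct_mulVec, ← mulVec_transpose, hT, dotProduct_comm]

lemma lmin_mul_le {n : Type*} [Fintype n] {S : Matrix n n ℝ}
    (hpsd : ∀ x : n → ℝ, 0 ≤ x ⬝ᵥ S *ᵥ x) (x : n → ℝ) :
    lmin S * (∑ i, x i ^ 2) ≤ x ⬝ᵥ S *ᵥ x := by
  by_cases hx : ∑ i, x i ^ 2 = 0
  · rw [hx, mul_zero]; exact hpsd x
  · have hTpos : 0 < ∑ i, x i ^ 2 :=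
      lt_of_le_of_ne (Finset.sum_nonneg fun i _ => sq_nonneg _) (Ne.symm hx)
    set c : ℝ := (Real.sqrt (∑ i, x i ^ 2))⁻¹ with hc_def
    have hc2 : c ^ 2 = (∑ i, x i ^ 2)⁻¹ := by
      rw [hc_def, ← Real.sqrt_inv, Real.sq_sqrt (by positivity)]
    have hmem : ∑ i, (c • x) i ^ 2 = 1 := by
      simp only [Pi.smul_apply, smul_eq_mul, mul_pow, ← Finset.mul_sum]
      rw [hc2]; exact inv_mul_cancel₀ hx
    have hbdd : BddBelow (Set.range fun z : {x : n → ℝ // ∑ i, x i ^ 2 = 1} =>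
        (z : n → ℝ) ⬝ᵥ S *ᵥ z) := by
      refine ⟨0, ?_⟩
      rintro v ⟨z, rfl⟩
      exact hpsd z
    have hle := ciInf_le hbdd ⟨c • x, hmem⟩
    have hval : (c • x) ⬝ᵥ S *ᵥ (c • x) = c ^ 2 * (x ⬝ᵥ S *ᵥ x) := by
      rw [smul_dotProduct, mulVec_smul, dotProduct_smul]
      simp [smul_eq_mul]; ring
    rw [hval] at hle
    calc lmin S * (∑ i, x i ^ 2) ≤ c ^ 2 * (x ⬝ᵥ S *ᵥ x) * (∑ i, x i ^ 2) := by
          exact mul_le_mul_of_nonneg_right hle hTpos.le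
      _ = x ⬝ᵥ S *ᵥ x := by
          rw [hc2]; field_simp

lemma cs_psd {n : Type*} [Fintype n] {S : Matrix n n ℝ} (hH : S.IsHermitian)
    (hpsd : ∀ x : n → ℝ, 0 ≤ x ⬝ᵥ S *ᵥ x) (u v : n → ℝ) :
    (u ⬝ᵥ S *ᵥ v) ^ 2 ≤ (u ⬝ᵥ S *ᵥ u) * (v ⬝ᵥ S *ᵥ v) := by
  have key : ∀ r : ℝ, 0 ≤ (v ⬝ᵥ S *ᵥ v) * (r * r) + (2 * (u ⬝ᵥ S *ᵥ v)) * r + (u ⬝ᵥ S *ᵥ u) := by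
    intro r
    have h := hpsd (u + r • v)
    have hexp : (u + r • v) ⬝ᵥ S *ᵥ (u + r • v)
        = (v ⬝ᵥ S *ᵥ v) * (r * r) + (2 * (u ⬝ᵥ S *ᵥ v)) * r + (u ⬝ᵥ S *ᵥ u) := by
      simp only [mulVec_add, mulVec_smul, dotProduct_add, add_dotProduct,
        dotProduct_smul, smul_dotProduct, smul_eq_mul, dot_symm hH v u]
      ring
    linarith [hexp ▸ h]
  have hd := discrim_le_zero key
  rw [discrim] at hd
  nlinarith [hd]

/-- for the regression block covariance matrix
`S' = [[S, Sβ], [βᵀS, σε² + βᵀSβ]]` with `S` symmetric positive definite and `σε > 0`,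
`λ_min(S') ≥ σε² λ_min(S) / (σε² + βᵀSβ + λ_min(S))`. -/
theorem stmt13 {d : ℕ} (S : Matrix (Fin d) (Fin d) ℝ) (hS : S.PosDef)
    (β : Fin d → ℝ) (σε : ℝ) (hσ : 0 < σε) :
    σε ^ 2 * lmin S / (σε ^ 2 + β ⬝ᵥ S.mulVec β + lmin S) ≤
      lmin (Matrix.fromBlocks S
        (Matrix.of fun i (_ : Unit) => S.mulVec β i)
        (Matrix.of fun (_ : Unit) j => S.mulVec β j)
        (Matrix.of fun (_ : Unit) (_ : Unit) => σε ^ 2 + β ⬝ᵥ S.mulVec β)) := by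
  have hpsd : ∀ x : Fin d → ℝ, 0 ≤ x ⬝ᵥ S *ᵥ x := fun x => by
    simpa using hS.posSemidef.dotProduct_mulVec_nonneg x
  have hb : 0 ≤ β ⬝ᵥ S.mulVec β := hpsd β
  have hlam0 : 0 ≤ lmin S := by
    rcases isEmpty_or_nonempty {x : Fin d → ℝ // ∑ i, x i ^ 2 = 1} with h | h
    · rw [lmin, iInf_of_isEmpty, Real.sInf_empty]
    · exact le_ciInf fun z => hpsd z
  have hm : 0 < σε ^ 2 + β ⬝ᵥ S.mulVec β + lmin S := by positivity
  have hne : Nonempty {x : (Fin d ⊕ Unit) → ℝ // ∑ i, x i ^ 2 = 1} := by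
    refine ⟨⟨Sum.elim 0 1, ?_⟩⟩
    simp [Fintype.sum_sum_type]
  refine le_ciInf fun z => ?_
  rw [div_le_iff₀ hm]
  -- decompose z
  set x : Fin d → ℝ := fun i => (z : (Fin d ⊕ Unit) → ℝ) (Sum.inl i) with hx_def
  set t : ℝ := (z : (Fin d ⊕ Unit) → ℝ) (Sum.inr ()) with ht_def
  have hz : (z : (Fin d ⊕ Unit) → ℝ) = Sum.elim x (fun _ => t) := by
    funext i
    cases i with
    | inl i => rfl
    | inr u => cases u; rfl
  have hcon : (∑ i, x i ^ 2) + t ^ 2 = 1 := by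
    have := z.2
    rw [hz] at this
    simpa [Fintype.sum_sum_type] using this
  have ht1 : t ^ 2 ≤ 1 := by
    nlinarith [Finset.sum_nonneg (fun i (_ : i ∈ Finset.univ) => sq_nonneg (x i))]
  -- value of the quadratic form
  set y : Fin d → ℝ := x + t • β with hy_def
  have hQ : (z : (Fin d ⊕ Unit) → ℝ) ⬝ᵥ
      (Matrix.fromBlocks S
        (Matrix.of fun i (_ : Unit) => S.mulVec β i)
        (Matrix.of fun (_ : Unit) j => S.mulVec β j)
        (Matrix.of fun (_ : Unit) (_ : Unit) => σε ^ 2 + β ⬝ᵥ S.mulVec β)) *ᵥ z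
      = y ⬝ᵥ S *ᵥ y + σε ^ 2 * t ^ 2 := by
    rw [hz, fromBlocks_mulVec, sumElim_dotProduct_sumElim]
    simp only [Sum.elim_comp_inl, Sum.elim_comp_inr]
    have hB : (Matrix.of fun i (_ : Unit) => S.mulVec β i) *ᵥ (fun _ => t)
        = t • (S *ᵥ β) := by
      funext i
      simp [Matrix.mulVec, dotProduct, mul_comm]
    have hC : (Matrix.of fun (_ : Unit) j => S.mulVec β j) *ᵥ x
        = fun _ => (S *ᵥ β) ⬝ᵥ x := by
      funext u
      simp [Matrix.mulVec, dotProduct]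
    have hD : (Matrix.of fun (_ : Unit) (_ : Unit) => σε ^ 2 + β ⬝ᵥ S.mulVec β) *ᵥ
        (fun _ => t) = fun _ => (σε ^ 2 + β ⬝ᵥ S.mulVec β) * t := by
      funext u
      simp [Matrix.mulVec, dotProduct]
    rw [hB, hC, hD]
    have hdotU : ∀ w : Unit → ℝ, (fun (_ : Unit) => t) ⬝ᵥ w = t * w () := by
      intro w; simp [dotProduct]
    rw [dotProduct_add, hdotU]
    have h1 : x ⬝ᵥ (t • (S *ᵥ β)) = t * (x ⬝ᵥ S *ᵥ β) := by
      rw [dotProduct_smul, smul_eq_mul]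
    simp only [Pi.add_apply]
    rw [h1]
    have h3 : (S *ᵥ β) ⬝ᵥ x = x ⬝ᵥ S *ᵥ β := dotProduct_comm _ _
    have hyexp : y ⬝ᵥ S *ᵥ y = x ⬝ᵥ S *ᵥ x + 2 * t * (x ⬝ᵥ S *ᵥ β)
        + t ^ 2 * (β ⬝ᵥ S.mulVec β) := by
      simp only [hy_def, mulVec_add, mulVec_smul, dotProduct_add, add_dotProduct,
        dotProduct_smul, smul_dotProduct, smul_eq_mul, dot_symm hS.1 β x]
      rw [show β ⬝ᵥ S.mulVec β = β ⬝ᵥ S *ᵥ β from rfl]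
      ring
    rw [h3, hyexp]
    ring
  rw [hQ]
  -- scalar facts
  set p : ℝ := β ⬝ᵥ S *ᵥ y with hp_def
  set s : ℝ := y ⬝ᵥ S *ᵥ y with hs_def
  have hs0 : 0 ≤ s := hpsd y
  have hcs : p ^ 2 ≤ (β ⬝ᵥ S.mulVec β) * s := cs_psd hS.1 hpsd β y
  have hxSx : x ⬝ᵥ S *ᵥ x = s - 2 * t * p + t ^ 2 * (β ⬝ᵥ S.mulVec β) := by
    have hx_eq : x = y - t • β := by rw [hy_def]; abel
    rw [hx_eq]
    simp only [mulVec_sub, mulVec_smul, dotProduct_sub, sub_dotProduct,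
      dotProduct_smul, smul_dotProduct, smul_eq_mul, dot_symm hS.1 y β, hp_def, hs_def]
    rw [show β ⬝ᵥ S.mulVec β = β ⬝ᵥ S *ᵥ β from rfl]
    ring
  have hkey : lmin S * (1 - t ^ 2) ≤ s - 2 * t * p + t ^ 2 * (β ⬝ᵥ S.mulVec β) := by
    have := lmin_mul_le hpsd x
    rw [hxSx] at this
    have hsum : (∑ i, x i ^ 2) = 1 - t ^ 2 := by linarith
    rwa [hsum] at this
  nlinarith [sq_nonneg (p + σε ^ 2 * t), mul_nonneg hlam0 hs0, sq_nonneg σε,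
    mul_le_mul_of_nonneg_left hkey (sq_nonneg σε), hcs, hs0, hb, hlam0, ht1,
    mul_pos (mul_pos hσ hσ) hm]
end

section
/- Let M, M' be symmetric positive definite d×d matrices and Q₁ = M − S, Q₂ = v − u, where S is symmetric positive definite, v, u ∈ ℝ^d, β* = S^{-1}u, and β̂ = M^{-1}v. Then for any symmetric positive definite Σ, writing w* = Σ^{1/2}β* and ŵ = Σ^{1/2}β̂: ‖ŵ − w*‖₂² ≤ 2 ‖Σ^{1/2} M^{-1} Σ^{1/2}‖₂² (‖Σ^{-1/2} Q₁ Σ^{-1/2}‖₂² ‖w*‖₂² + ‖Σ^{-1/2} Q₂‖₂²). -/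
open Matrix

noncomputable def specNorm {d : ℕ} (M : Matrix (Fin d) (Fin d) ℝ) : ℝ :=
  ‖Matrix.toEuclideanCLM (𝕜 := ℝ) M‖

/-- The square root of a positive semidefinite matrix, as defined in the older Mathlib. -/
noncomputable def Matrix.PosSemidef.sqrt {n 𝕜 : Type*} [Fintype n] [DecidableEq n] [RCLike 𝕜]
    [PartialOrder 𝕜] [StarOrderedRing 𝕜] {A : Matrix n n 𝕜} (hA : A.PosSemidef) : Matrix n n 𝕜 :=
  hA.1.eigenvectorUnitary.1 * diagonal ((↑) ∘ Real.sqrt ∘ hA.1.eigenvalues) *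
  (star hA.1.eigenvectorUnitary : Matrix n n 𝕜)

lemma Matrix.PosSemidef.sqrt_mul_self {d : ℕ} {A : Matrix (Fin d) (Fin d) ℝ}
    (hA : A.PosSemidef) : hA.sqrt * hA.sqrt = A := by
  have hU : (star hA.1.eigenvectorUnitary : Matrix (Fin d) (Fin d) ℝ) *
      hA.1.eigenvectorUnitary.1 = 1 := Unitary.coe_star_mul_self _
  have hD : diagonal (RCLike.ofReal ∘ Real.sqrt ∘ hA.1.eigenvalues) *
      diagonal (RCLike.ofReal ∘ Real.sqrt ∘ hA.1.eigenvalues) =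
      diagonal (RCLike.ofReal ∘ hA.1.eigenvalues : Fin d → ℝ) := by
    rw [diagonal_mul_diagonal]
    congr 1
    funext i
    simp [Real.mul_self_sqrt (hA.eigenvalues_nonneg i)]
  conv_rhs => rw [hA.1.spectral_theorem, Unitary.conjStarAlgAut_apply]
  rw [Matrix.PosSemidef.sqrt]
  calc _ = hA.1.eigenvectorUnitary.1 * diagonal (RCLike.ofReal ∘ Real.sqrt ∘ hA.1.eigenvalues) *
        ((star hA.1.eigenvectorUnitary : Matrix (Fin d) (Fin d) ℝ) * hA.1.eigenvectorUnitary.1) *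
        diagonal (RCLike.ofReal ∘ Real.sqrt ∘ hA.1.eigenvalues) *
        (star hA.1.eigenvectorUnitary : Matrix (Fin d) (Fin d) ℝ) := by simp only [mul_assoc]
    _ = _ := by rw [hU, mul_one, mul_assoc _ (diagonal _) (diagonal _), hD]

noncomputable def enorm' {d : ℕ} (x : Fin d → ℝ) : ℝ :=
  ‖(WithLp.equiv 2 (Fin d → ℝ)).symm x‖

lemma enorm'_nonneg {d : ℕ} (x : Fin d → ℝ) : 0 ≤ enorm' x := norm_nonneg _

lemma enorm'_sq {d : ℕ} (x : Fin d → ℝ) : enorm' x ^ 2 = ∑ i, x i ^ 2 := by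
  rw [enorm', EuclideanSpace.norm_eq, Real.sq_sqrt (by positivity)]
  simp [Real.norm_eq_abs, sq_abs]

lemma enorm'_mulVec_le {d : ℕ} (A : Matrix (Fin d) (Fin d) ℝ) (x : Fin d → ℝ) :
    enorm' (A.mulVec x) ≤ specNorm A * enorm' x := by
  have h := (Matrix.toEuclideanCLM (𝕜 := ℝ) A).le_opNorm ((WithLp.equiv 2 (Fin d → ℝ)).symm x)
  rwa [WithLp.equiv_symm_apply, Matrix.toEuclideanCLM_toLp, ← WithLp.equiv_symm_apply] at h

lemma enorm'_sub_le {d : ℕ} (x y : Fin d → ℝ) : enorm' (x - y) ≤ enorm' x + enorm' y := by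
  simpa [enorm'] using norm_sub_le ((WithLp.equiv 2 (Fin d → ℝ)).symm x)
    ((WithLp.equiv 2 (Fin d → ℝ)).symm y)

/-- the core error-decomposition inequality for the private LSE.
With `Q₁ = M − S`, `Q₂ = v − u`, `β* = S⁻¹u`, `β̂ = M⁻¹v`, `w* = Σ^{1/2}β*`,
`ŵ = Σ^{1/2}β̂` (all matrices symmetric positive definite):
`‖ŵ − w*‖₂² ≤ 2‖Σ^{1/2}M⁻¹Σ^{1/2}‖₂² (‖Σ^{-1/2}Q₁Σ^{-1/2}‖₂²‖w*‖₂² + ‖Σ^{-1/2}Q₂‖₂²)`. -/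
theorem stmt17 {d : ℕ} (M S Sig : Matrix (Fin d) (Fin d) ℝ)
    (hM : M.PosDef) (hS : S.PosDef) (hSig : Sig.PosDef)
    (u v : Fin d → ℝ) :
    let Q₁ := M - S
    let Q₂ := v - u
    let βstar := S⁻¹.mulVec u
    let βhat := M⁻¹.mulVec v
    let sq := hSig.posSemidef.sqrt
    let wstar := sq.mulVec βstar
    let what := sq.mulVec βhat
    (∑ i, (what i - wstar i) ^ 2) ≤
      2 * specNorm (sq * M⁻¹ * sq) ^ 2 *
        (specNorm (sq⁻¹ * Q₁ * sq⁻¹) ^ 2 * (∑ i, wstar i ^ 2) +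
          ∑ i, sq⁻¹.mulVec Q₂ i ^ 2) := by
  intro Q₁ Q₂ βstar βhat sq wstar what
  have hsqmul : sq * sq = Sig := hSig.posSemidef.sqrt_mul_self
  have hdet : IsUnit sq.det := by
    have h2 : sq.det * sq.det = Sig.det := by rw [← det_mul, hsqmul]
    have hpos : 0 < Sig.det := hSig.det_pos
    refine isUnit_iff_ne_zero.2 fun h => ?_
    rw [h, mul_zero] at h2
    exact hpos.ne h2
  have hinv1 : sq * sq⁻¹ = 1 := mul_nonsing_inv _ hdet
  have hinv2 : sq⁻¹ * sq = 1 := nonsing_inv_mul _ hdet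
  have hMinv : M⁻¹ * M = 1 := nonsing_inv_mul _ hM.det_pos.ne'.isUnit
  have hSinv : S * S⁻¹ = 1 := mul_nonsing_inv _ hS.det_pos.ne'.isUnit
  set A := sq * M⁻¹ * sq with hA
  set B := sq⁻¹ * Q₁ * sq⁻¹ with hB
  have e1 : A * sq⁻¹ = sq * M⁻¹ := by rw [hA, mul_assoc, hinv1, mul_one]
  have e2 : A * (B * (sq * S⁻¹)) = sq * S⁻¹ - sq * M⁻¹ := by
    have h3 : A * (B * (sq * S⁻¹)) = sq * (M⁻¹ * (Q₁ * S⁻¹)) := by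
      rw [hA, hB]
      calc sq * M⁻¹ * sq * (sq⁻¹ * Q₁ * sq⁻¹ * (sq * S⁻¹))
          = sq * M⁻¹ * ((sq * sq⁻¹) * Q₁ * ((sq⁻¹ * sq) * S⁻¹)) := by noncomm_ring
        _ = sq * (M⁻¹ * (Q₁ * S⁻¹)) := by
            rw [hinv1, hinv2, one_mul, one_mul, mul_assoc]
    rw [h3, show Q₁ = M - S from rfl, sub_mul, hSinv, mul_sub, mul_one, ← mul_assoc,
      hMinv, one_mul, mul_sub]
  have key : what - wstar = A.mulVec (sq⁻¹.mulVec Q₂ - B.mulVec wstar) := by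
    show sq.mulVec (M⁻¹.mulVec v) - sq.mulVec (S⁻¹.mulVec u)
        = A.mulVec (sq⁻¹.mulVec (v - u) - B.mulVec (sq.mulVec (S⁻¹.mulVec u)))
    simp only [mulVec_mulVec]
    rw [Matrix.mulVec_sub, mulVec_mulVec, mulVec_mulVec, e1, e2, Matrix.mulVec_sub,
      Matrix.sub_mulVec]
    abel
  have hb : enorm' (sq⁻¹.mulVec Q₂ - B.mulVec wstar)
      ≤ enorm' (sq⁻¹.mulVec Q₂) + specNorm B * enorm' wstar :=
    (enorm'_sub_le _ _).trans (add_le_add_right (enorm'_mulVec_le B wstar) _)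
  have h1 : enorm' (what - wstar)
      ≤ specNorm A * (enorm' (sq⁻¹.mulVec Q₂) + specNorm B * enorm' wstar) := by
    rw [key]
    exact (enorm'_mulVec_le A _).trans (mul_le_mul_of_nonneg_left hb (norm_nonneg _))
  have hsum : ∑ i, (what i - wstar i) ^ 2 = enorm' (what - wstar) ^ 2 := by
    rw [enorm'_sq]; rfl
  have h2 := pow_le_pow_left₀ (enorm'_nonneg _) h1 2
  rw [hsum, ← enorm'_sq wstar, ← enorm'_sq (sq⁻¹.mulVec Q₂)]
  set a := enorm' (sq⁻¹.mulVec Q₂)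
  set c := enorm' wstar
  have ha : 0 ≤ a := enorm'_nonneg _
  have hc : 0 ≤ c := enorm'_nonneg _
  have hnA : (0:ℝ) ≤ specNorm A := norm_nonneg _
  have hnB : (0:ℝ) ≤ specNorm B := norm_nonneg _
  nlinarith [h2, sq_nonneg (specNorm B * c - a), sq_nonneg (specNorm A),
    mul_nonneg (mul_nonneg hnA hnA) (sq_nonneg (specNorm B * c - a))]
end
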